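/- (Deterministic form of Lemma 2.4, alternative case.) Let β > 0, r ≥ 1, γ ≠ 0, and let (z_n) be a sequence of reals with z_n/√n → γ. Then liminf_{n→∞} (1/n) log BF₁₀(z_n | βn, r) ≥ γ²/2; in particular, for every 0 < c < γ²/2 one has BF₀₁(z_n | βn, r) = 1/BF₁₀(z_n | βn, r) ≤ exp(−cn) for all sufficiently large n, so BF₀₁(z_n|βn,r) → 0. -/

import Mathlib

open Real MeasureTheory Filter

/-- Rising factorial (Pochhammer symbol) `(a)_k`. -/
noncomputable def risingFac (a : ℝ) (k : ℕ) : ℝ := (ascPochhammer ℝ k).eval a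

/-- Confluent hypergeometric function `₁F₁(a, b; x)`. -/
noncomputable def oneF1 (a b x : ℝ) : ℝ :=
  ∑' k : ℕ, (risingFac a k / risingFac b k) * x ^ k / (Nat.factorial k : ℝ)

/-- Two-sided `z` Bayes factor `BF₁₀(z | τ², r)` as a function of `τ² = τsq`. -/
noncomputable def BF10z (z τsq r : ℝ) : ℝ :=
  (1 + τsq) ^ (-(r + 1 / 2)) *
    oneF1 (r + 1 / 2) (1 / 2) (τsq * z ^ 2 / (2 * (1 + τsq)))

lemma risingFac_pos {a : ℝ} (ha : 0 < a) (k : ℕ) : 0 < risingFac a k := by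
  induction k with
  | zero => simp [risingFac]
  | succ n ih => rw [risingFac, ascPochhammer_succ_eval]; exact mul_pos ih (by positivity)

lemma risingFac_le {a : ℝ} (ha : (1:ℝ)/2 ≤ a) (k : ℕ) : risingFac (1/2) k ≤ risingFac a k := by
  induction k with
  | zero => simp [risingFac]
  | succ n ih =>
    rw [risingFac, risingFac, ascPochhammer_succ_eval, ascPochhammer_succ_eval]
    have h1 := risingFac_pos (show (0:ℝ) < 1/2 by norm_num) n
    exact mul_le_mul ih (by linarith) (by positivity) (h1.le.trans ih)

lemma risingFac_le_upper {a : ℝ} (ha : (1:ℝ)/2 ≤ a) (k : ℕ) :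
    risingFac a k ≤ (2*a)^k * risingFac (1/2) k := by
  induction k with
  | zero => simp [risingFac]
  | succ n ih =>
    rw [risingFac, risingFac, ascPochhammer_succ_eval, ascPochhammer_succ_eval, pow_succ]
    have h1 := risingFac_pos (show (0:ℝ) < 1/2 by norm_num) n
    have h2 : a + n ≤ 2*a*(1/2 + n) := by nlinarith
    have h3 : 0 ≤ a + n := by nlinarith
    calc (ascPochhammer ℝ n).eval a * (a + n)
        ≤ ((2*a)^n * risingFac (1/2) n) * (2*a*(1/2+n)) := by
          apply mul_le_mul ih h2 h3
          positivity
      _ = (2*a)^n * 2*a * (risingFac (1/2) n * (1/2 + n)) := by ring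
      _ = _ := by unfold risingFac; ring

lemma term_bounds {a x : ℝ} (ha : (1:ℝ)/2 ≤ a) (hx : 0 ≤ x) (k : ℕ) :
    x ^ k / (Nat.factorial k : ℝ) ≤ (risingFac a k / risingFac (1/2) k) * x ^ k / (Nat.factorial k : ℝ)
    ∧ (risingFac a k / risingFac (1/2) k) * x ^ k / (Nat.factorial k : ℝ) ≤ (2*a*x) ^ k / (Nat.factorial k : ℝ) := by
  have h1 := risingFac_pos (show (0:ℝ) < 1/2 by norm_num) k
  have hk : (0:ℝ) < Nat.factorial k := by positivity
  constructor
  · apply div_le_div_of_nonneg_right _ hk.le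
    nlinarith [risingFac_le ha k, pow_nonneg hx k,
      (one_le_div h1).2 (risingFac_le ha k), mul_le_mul_of_nonneg_right ((one_le_div h1).2 (risingFac_le ha k)) (pow_nonneg hx k)]
  · apply div_le_div_of_nonneg_right _ hk.le
    rw [mul_pow]
    have := risingFac_le_upper ha k
    have h4 : risingFac a k / risingFac (1/2) k ≤ (2*a)^k := by
      rw [div_le_iff₀ h1]; exact this
    exact mul_le_mul_of_nonneg_right h4 (pow_nonneg hx k)

lemma summable_oneF1 {a x : ℝ} (ha : (1:ℝ)/2 ≤ a) (hx : 0 ≤ x) :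
    Summable (fun k : ℕ => (risingFac a k / risingFac (1/2) k) * x ^ k / (Nat.factorial k : ℝ)) := by
  apply Summable.of_nonneg_of_le (fun k => ?_) (fun k => (term_bounds ha hx k).2)
    (Real.summable_pow_div_factorial (2*a*x))
  have h1 := risingFac_pos (show (0:ℝ) < 1/2 by norm_num) k
  have h2 := risingFac_pos (show (0:ℝ) < a by linarith) k
  positivity

lemma oneF1_ge_exp {a x : ℝ} (ha : (1:ℝ)/2 ≤ a) (hx : 0 ≤ x) :
    Real.exp x ≤ oneF1 a (1/2) x := by
  have hexp : Real.exp x = ∑' k : ℕ, x ^ k / (Nat.factorial k : ℝ) := by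
    rw [Real.exp_eq_exp_ℝ, NormedSpace.exp_eq_tsum_div]
  rw [hexp, oneF1]
  exact Summable.tsum_le_tsum (fun k => (term_bounds ha hx k).1)
    (Real.summable_pow_div_factorial x) (summable_oneF1 ha hx)

lemma oneF1_le_exp {a x : ℝ} (ha : (1:ℝ)/2 ≤ a) (hx : 0 ≤ x) :
    oneF1 a (1/2) x ≤ Real.exp (2*a*x) := by
  have hexp : Real.exp (2*a*x) = ∑' k : ℕ, (2*a*x) ^ k / (Nat.factorial k : ℝ) := by
    rw [Real.exp_eq_exp_ℝ, NormedSpace.exp_eq_tsum_div]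
  rw [hexp, oneF1]
  exact Summable.tsum_le_tsum (fun k => (term_bounds ha hx k).2)
    (summable_oneF1 ha hx) (Real.summable_pow_div_factorial (2*a*x))

lemma BF10z_bounds {z τsq r : ℝ} (hτ : 0 ≤ τsq) (hr : 1 ≤ r) :
    (1 + τsq) ^ (-(r + 1 / 2)) * Real.exp (τsq * z ^ 2 / (2 * (1 + τsq))) ≤ BF10z z τsq r ∧
    BF10z z τsq r ≤ (1 + τsq) ^ (-(r + 1 / 2)) *
      Real.exp (2*(r+1/2)*(τsq * z ^ 2 / (2 * (1 + τsq)))) := by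
  have h1 : (0:ℝ) < 1 + τsq := by linarith
  have hx : 0 ≤ τsq * z ^ 2 / (2 * (1 + τsq)) := by positivity
  have hP : (0:ℝ) < (1 + τsq) ^ (-(r + 1 / 2)) := Real.rpow_pos_of_pos h1 _
  have ha : (1:ℝ)/2 ≤ r + 1/2 := by linarith
  exact ⟨mul_le_mul_of_nonneg_left (oneF1_ge_exp ha hx) hP.le,
    mul_le_mul_of_nonneg_left (oneF1_le_exp ha hx) hP.le⟩

lemma BF10z_pos {z τsq r : ℝ} (hτ : 0 ≤ τsq) (hr : 1 ≤ r) : 0 < BF10z z τsq r := by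
  have h1 : (0:ℝ) < 1 + τsq := by linarith
  refine lt_of_lt_of_le ?_ (BF10z_bounds hτ hr).1
  exact mul_pos (Real.rpow_pos_of_pos h1 _) (Real.exp_pos _)

lemma tendsto_logterm (β r : ℝ) (hβ : 0 < β) :
    Tendsto (fun n : ℕ => (1/(n:ℝ)) * (-(r+1/2) * Real.log (1 + β*n))) atTop (nhds 0) := by
  have hg := Real.tendsto_pow_log_div_mul_add_atTop (1/β) (-(1/β)) 1 (by positivity)
  have hu : Tendsto (fun n : ℕ => 1 + β*(n:ℝ)) atTop atTop :=
    tendsto_atTop_add_const_left _ _ (tendsto_natCast_atTop_atTop.const_mul_atTop hβ)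
  have hcomp := hg.comp hu
  have hcomp2 : Tendsto (fun n : ℕ => (1/(n:ℝ)) * Real.log (1 + β*n)) atTop (nhds 0) := by
    refine hcomp.congr fun n => ?_
    show Real.log (1 + β*(n:ℝ)) ^ 1 / (1/β * (1 + β*n) + -(1/β)) = _
    have : 1/β * (1 + β*(n:ℝ)) + -(1/β) = n := by field_simp; ring
    rw [this, pow_one]; ring
  have := hcomp2.const_mul (-(r+1/2))
  rw [mul_zero] at this
  refine this.congr fun n => ?_
  ring

lemma tendsto_xterm (β γ : ℝ) (hβ : 0 < β) (z : ℕ → ℝ)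
    (hz : Tendsto (fun n : ℕ => z n / Real.sqrt n) atTop (nhds γ)) :
    Tendsto (fun n : ℕ => (1/(n:ℝ)) * (β*n * z n ^ 2 / (2*(1+β*n)))) atTop
      (nhds (γ^2/2)) := by
  have lim1 : Tendsto (fun n : ℕ => (z n / Real.sqrt n)^2) atTop (nhds (γ^2)) := hz.pow 2
  have lim2 : Tendsto (fun n : ℕ => β/(2*((1/(n:ℝ))+β))) atTop (nhds (β/(2*(0+β)))) := by
    apply Tendsto.div tendsto_const_nhds
    · exact (tendsto_one_div_atTop_nhds_zero_nat.add tendsto_const_nhds).const_mul 2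
    · positivity
  have lim := lim1.mul lim2
  have hval : γ^2 * (β/(2*(0+β))) = γ^2/2 := by field_simp; ring
  rw [hval] at lim
  refine lim.congr' ?_
  filter_upwards [eventually_ge_atTop 1] with n hn
  have hn0 : (0:ℝ) < n := by exact_mod_cast hn
  have h1 : (0:ℝ) < 1 + β*n := by positivity
  rw [div_pow, Real.sq_sqrt hn0.le]
  field_simp

/-- Deterministic form of Lemma 2.4, alternative case. -/
theorem lemma24_alternative (β r γ : ℝ) (hβ : 0 < β) (hr : 1 ≤ r) (hγ : γ ≠ 0)
    (z : ℕ → ℝ)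
    (hz : Tendsto (fun n : ℕ => z n / Real.sqrt n) atTop (nhds γ)) :
    γ ^ 2 / 2 ≤
        Filter.liminf (fun n : ℕ => (1 / (n : ℝ)) * Real.log (BF10z (z n) (β * n) r)) atTop ∧
    (∀ c : ℝ, 0 < c → c < γ ^ 2 / 2 →
      ∀ᶠ n : ℕ in atTop, 1 / BF10z (z n) (β * n) r ≤ Real.exp (-c * n)) ∧
    Tendsto (fun n : ℕ => 1 / BF10z (z n) (β * n) r) atTop (nhds 0) := by
  set f : ℕ → ℝ := fun n => (1 / (n : ℝ)) * Real.log (BF10z (z n) (β * n) r) with hf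
  set X : ℕ → ℝ := fun n => β*n * z n ^ 2 / (2*(1+β*n)) with hX
  set L : ℕ → ℝ := fun n => -(r+1/2) * Real.log (1 + β*(n:ℝ)) with hL
  have hτ : ∀ n : ℕ, (0:ℝ) ≤ β * n := fun n => by positivity
  have hBFpos : ∀ n : ℕ, 0 < BF10z (z n) (β * n) r := fun n => BF10z_pos (hτ n) hr
  -- lower bound for f
  have hlow : ∀ n : ℕ, (1/(n:ℝ)) * (L n + X n) ≤ f n := by
    intro n
    apply mul_le_mul_of_nonneg_left _ (by positivity)
    have h1 : (0:ℝ) < 1 + β*n := by positivity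
    have := (BF10z_bounds (z := z n) (hτ n) hr).1
    calc L n + X n
        = Real.log ((1 + β*(n:ℝ)) ^ (-(r + 1 / 2)) * Real.exp (β*n * z n ^ 2 / (2*(1+β*n)))) := by
          rw [Real.log_mul (by positivity) (Real.exp_ne_zero _), Real.log_rpow h1,
            Real.log_exp]
      _ ≤ Real.log (BF10z (z n) (β * n) r) := Real.log_le_log (by positivity) this
  -- upper bound for f
  have hup : ∀ n : ℕ, f n ≤ (1/(n:ℝ)) * (L n + 2*(r+1/2) * X n) := by
    intro n
    apply mul_le_mul_of_nonneg_left _ (by positivity)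
    have h1 : (0:ℝ) < 1 + β*n := by positivity
    have := (BF10z_bounds (z := z n) (hτ n) hr).2
    calc Real.log (BF10z (z n) (β * n) r)
        ≤ Real.log ((1 + β*(n:ℝ)) ^ (-(r + 1 / 2)) *
            Real.exp (2*(r+1/2)*(β*n * z n ^ 2 / (2*(1+β*n))))) :=
          Real.log_le_log (hBFpos n) this
      _ = L n + 2*(r+1/2) * X n := by
          rw [Real.log_mul (by positivity) (Real.exp_ne_zero _), Real.log_rpow h1,
            Real.log_exp]
  -- limits
  have hLlim := tendsto_logterm β r hβ
  have hXlim := tendsto_xterm β γ hβ z hz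
  have hlowlim : Tendsto (fun n : ℕ => (1/(n:ℝ)) * (L n + X n)) atTop (nhds (γ^2/2)) := by
    have := hLlim.add hXlim
    rw [zero_add] at this
    refine this.congr fun n => by ring
  have huplim : Tendsto (fun n : ℕ => (1/(n:ℝ)) * (L n + 2*(r+1/2) * X n)) atTop
      (nhds (0 + 2*(r+1/2) * (γ^2/2))) := by
    have := hLlim.add ((hXlim.const_mul (2*(r+1/2))))
    refine this.congr fun n => by ring
  -- part 1
  have part1 : γ ^ 2 / 2 ≤ Filter.liminf f atTop := by
    have hbdd : IsBoundedUnder (· ≤ ·) atTop f :=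
      huplim.isBoundedUnder_le.mono_le (Eventually.of_forall hup)
    calc γ ^ 2 / 2 = Filter.liminf (fun n : ℕ => (1/(n:ℝ)) * (L n + X n)) atTop :=
          (hlowlim.liminf_eq).symm
      _ ≤ Filter.liminf f atTop :=
          liminf_le_liminf (Eventually.of_forall hlow)
            hlowlim.isBoundedUnder_ge hbdd.isCoboundedUnder_ge
  -- part 2
  have part2 : ∀ c : ℝ, 0 < c → c < γ ^ 2 / 2 →
      ∀ᶠ n : ℕ in atTop, 1 / BF10z (z n) (β * n) r ≤ Real.exp (-c * n) := by
    intro c hc hc2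
    have hev : ∀ᶠ n : ℕ in atTop, c < (1/(n:ℝ)) * (L n + X n) :=
      hlowlim.eventually_const_lt hc2
    filter_upwards [hev, eventually_ge_atTop 1] with n hn hn1
    have hn0 : (0:ℝ) < n := by exact_mod_cast hn1
    have hfn : c < f n := lt_of_lt_of_le hn (hlow n)
    have hlog : c * n < Real.log (BF10z (z n) (β * n) r) := by
      have h := mul_lt_mul_of_pos_right hfn hn0
      have h2 : (1/(n:ℝ)) * Real.log (BF10z (z n) (β * n) r) * n
          = Real.log (BF10z (z n) (β * n) r) := by field_simp
      rw [hf] at h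
      simp only at h
      rw [h2] at h
      exact h
    have hBF : Real.exp (c * n) ≤ BF10z (z n) (β * n) r := by
      rw [← Real.exp_log (hBFpos n)]
      exact Real.exp_le_exp.2 hlog.le
    rw [neg_mul, Real.exp_neg]
    rw [← one_div]
    exact one_div_le_one_div_of_le (Real.exp_pos _) hBF
  refine ⟨part1, part2, ?_⟩
  -- part 3
  have hγ2 : 0 < γ^2 := by positivity
  have hc : (0:ℝ) < γ^2/4 := by linarith
  have hc2 : γ^2/4 < γ^2/2 := by linarith
  have hev := part2 (γ^2/4) hc hc2
  have hexp : Tendsto (fun n : ℕ => Real.exp (-(γ^2/4) * n)) atTop (nhds 0) := by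
    have hlt : Real.exp (-(γ^2/4)) < 1 := Real.exp_lt_one_iff.2 (by linarith)
    have := tendsto_pow_atTop_nhds_zero_of_lt_one (Real.exp_pos _).le hlt
    refine this.congr fun n => ?_
    rw [← Real.exp_nat_mul]
    congr 1
    ring
  refine tendsto_of_tendsto_of_tendsto_of_le_of_le' tendsto_const_nhds hexp ?_ hev
  filter_upwards with n
  exact (one_div_pos.mpr (hBFpos n)).le
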